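/- For every x ∈ ℤ, every γ ≥ 0 and every N ≥ 1, E_x[e^{γ L_N(S)}] ≤ e^{γ} E_0[e^{γ L_N(S)}]; more generally, for every integer k ≥ 1, E_x[e^{γ L_{kN}(S)}] ≤ (e^{γ} E_0[e^{γ L_N(S)}])^k. -/

import Mathlib

open MeasureTheory ProbabilityTheory Filter Real

noncomputable section

open scoped Classical in
/-- Indicator (as a real number) of a proposition. -/
noncomputable def ind (P : Prop) : ℝ := if P then 1 else 0

/-- A `±1` step of the simple random walk, encoded by a `Bool`. -/
def rwStep (b : Bool) : ℤ := if b then 1 else -1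

/-- Position at time `j` of the walk started at `x` with steps `σ`. -/
def pos (x : ℤ) {N : ℕ} (σ : Fin N → Bool) (j : ℕ) : ℤ :=
  x + ∑ i ∈ Finset.univ.filter (fun i : Fin N => (i : ℕ) < j), rwStep (σ i)

/-- Local time at `0` of the walk up to time `N`: `L_N = Σ_{j=1}^N 1_{S_j = 0}`. -/
def locTime (x : ℤ) {N : ℕ} (σ : Fin N → Bool) : ℝ :=
  ∑ j ∈ Finset.range N, ind (pos x σ (j + 1) = 0)

/-- Hamiltonian `H_N^u(S) = Σ_{j=1}^N (v(j,S_j) + u 1_{S_j=0})` in environment `V`. -/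
def hamil (u : ℝ) (V : ℕ × ℤ → ℝ) (x : ℤ) {N : ℕ} (σ : Fin N → Bool) : ℝ :=
  ∑ j ∈ Finset.range N,
    (V (j + 1, pos x σ (j + 1)) + u * ind (pos x σ (j + 1) = 0))

/-- Quenched partition function `Z_N^{β,u,q} = E_x[e^{β H_N^u(S)}]`, walk started at `x`. -/
def qZ (β u : ℝ) (V : ℕ × ℤ → ℝ) (N : ℕ) (x : ℤ) : ℝ :=
  (∑ σ : Fin N → Bool, Real.exp (β * hamil u V x σ)) / 2 ^ N

/-- Constrained partition function `Z_N(x,y;V) = E_x[e^{β H_N^u(S)} 1_{S_N=y}]`. -/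
def qZc (β u : ℝ) (V : ℕ × ℤ → ℝ) (N : ℕ) (x y : ℤ) : ℝ :=
  (∑ σ : Fin N → Bool, ind (pos x σ N = y) * Real.exp (β * hamil u V x σ)) / 2 ^ N

/-- Homogeneous pinning partition function `E_x[e^{γ L_N(S)}]`. -/
def homZ (γ : ℝ) (N : ℕ) (x : ℤ) : ℝ :=
  (∑ σ : Fin N → Bool, Real.exp (γ * locTime x σ)) / 2 ^ N

/-- Space-time shift of the environment: `(θ_{n,y}V)(k,z) = V(k+n, z+y)`. -/
def envShift (n : ℕ) (y : ℤ) (V : ℕ × ℤ → ℝ) : ℕ × ℤ → ℝ :=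
  fun p => V (p.1 + n, p.2 + y)

/-- Log moment generating function `Λ(β) = log E^Q[e^{β v(1,0)}]` of the disorder. -/
def logMGF (Q : Measure ((ℕ × ℤ) → ℝ)) (β : ℝ) : ℝ :=
  Real.log (∫ V, Real.exp (β * V (1, 0)) ∂Q)

/-- Assumptions on the disorder law `Q`: the environment variables are i.i.d.,
with mean `0`, variance `1`, and all exponential moments finite. -/
structure EnvAssumptions (Q : Measure ((ℕ × ℤ) → ℝ)) : Prop where
  prob : IsProbabilityMeasure Q
  indep : iIndepFun (fun p (V : (ℕ × ℤ) → ℝ) => V p) Q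
  ident : ∀ p : ℕ × ℤ, IdentDistrib (fun V : (ℕ × ℤ) → ℝ => V p)
      (fun V : (ℕ × ℤ) → ℝ => V (1, 0)) Q Q
  mean_zero : ∫ V, V (1, 0) ∂Q = 0
  variance_one : ∫ V, (V (1, 0)) ^ 2 ∂Q = 1
  exp_moment : ∀ β : ℝ, Integrable (fun V : (ℕ × ℤ) → ℝ => Real.exp (β * V (1, 0))) Q


lemma ind_nonneg (P : Prop) : 0 ≤ ind P := by
  unfold ind; split <;> norm_num

lemma pos_zero (x : ℤ) {N : ℕ} (σ : Fin N → Bool) : pos x σ 0 = x := by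
  simp [pos]

lemma pos_succ_cons (x : ℤ) {N : ℕ} (b : Bool) (σ : Fin N → Bool) (j : ℕ) :
    pos x (Fin.cons b σ) (j + 1) = pos (x + rwStep b) σ j := by
  unfold pos
  rw [Finset.sum_filter, Finset.sum_filter, Fin.sum_univ_succ]
  simp [Fin.cons_succ, Nat.succ_lt_succ_iff, add_assoc]

lemma locTime_cons (x : ℤ) {N : ℕ} (b : Bool) (σ : Fin N → Bool) :
    locTime x (Fin.cons b σ) = ind (x + rwStep b = 0) + locTime (x + rwStep b) σ := by
  unfold locTime
  rw [Finset.sum_range_succ']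
  have h0 : pos x (Fin.cons b σ) 1 = x + rwStep b := by
    rw [pos_succ_cons, pos_zero]
  have h1 : ∀ j, pos x (Fin.cons b σ) (j + 1 + 1) = pos (x + rwStep b) σ (j + 1) :=
    fun j => pos_succ_cons x b σ (j + 1)
  simp only [h0, h1]
  ring

lemma sum_cons_decomp {M : ℕ} (G : (Fin (M + 1) → Bool) → ℝ) :
    ∑ σ : Fin (M + 1) → Bool, G σ = ∑ b : Bool, ∑ τ : Fin M → Bool, G (Fin.cons b τ) := by
  rw [← (Fin.consEquiv (fun _ => Bool)).sum_comp G, Fintype.sum_prod_type]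
  rfl

lemma homZ_nonneg (γ : ℝ) (N : ℕ) (x : ℤ) : 0 ≤ homZ γ N x := by
  unfold homZ
  apply div_nonneg
  · exact Finset.sum_nonneg fun _ _ => (Real.exp_pos _).le
  · positivity

lemma homZ_zero (γ : ℝ) (x : ℤ) : homZ γ 0 x = 1 := by
  simp [homZ, locTime]

lemma homZ_succ (γ : ℝ) (M : ℕ) (x : ℤ) :
    homZ γ (M + 1) x =
      (∑ b : Bool, Real.exp (γ * ind (x + rwStep b = 0)) * homZ γ M (x + rwStep b)) / 2 := by
  have key : ∑ σ : Fin (M + 1) → Bool, Real.exp (γ * locTime x σ)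
      = ∑ b : Bool, Real.exp (γ * ind (x + rwStep b = 0)) *
          ∑ τ : Fin M → Bool, Real.exp (γ * locTime (x + rwStep b) τ) := by
    rw [sum_cons_decomp]
    refine Finset.sum_congr rfl fun b _ => ?_
    rw [Finset.mul_sum]
    refine Finset.sum_congr rfl fun τ _ => ?_
    rw [locTime_cons, mul_add, Real.exp_add]
  unfold homZ
  rw [key, Finset.sum_div, Finset.sum_div]
  refine Finset.sum_congr rfl fun b _ => ?_
  rw [pow_succ]
  field_simp

lemma homZ_split (γ : ℝ) (a b : ℕ) (x : ℤ) :
    homZ γ (a + b) x =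
      (∑ τ : Fin a → Bool, Real.exp (γ * locTime x τ) * homZ γ b (pos x τ a)) / 2 ^ a := by
  induction a generalizing x with
  | zero =>
      simp [locTime, pos_zero]
  | succ a ih =>
      have hnat : a + 1 + b = (a + b) + 1 := by omega
      rw [hnat, homZ_succ]
      have : ∀ b0 : Bool, homZ γ (a + b) (x + rwStep b0) =
          (∑ τ : Fin a → Bool, Real.exp (γ * locTime (x + rwStep b0) τ) *
            homZ γ b (pos (x + rwStep b0) τ a)) / 2 ^ a := fun b0 => ih _
      simp only [this]
      rw [sum_cons_decomp (fun σ => Real.exp (γ * locTime x σ) * homZ γ b (pos x σ (a + 1)))]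
      simp only [locTime_cons, pos_succ_cons, mul_add, Real.exp_add]
      rw [Finset.sum_div, Finset.sum_div]
      refine Finset.sum_congr rfl fun b0 _ => ?_
      have hS : (∑ τ : Fin a → Bool, Real.exp (γ * ind (x + rwStep b0 = 0)) *
            Real.exp (γ * locTime (x + rwStep b0) τ) * homZ γ b (pos (x + rwStep b0) τ a))
          = Real.exp (γ * ind (x + rwStep b0 = 0)) *
            ∑ τ : Fin a → Bool, Real.exp (γ * locTime (x + rwStep b0) τ) *
              homZ γ b (pos (x + rwStep b0) τ a) := by
        rw [Finset.mul_sum]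
        exact Finset.sum_congr rfl fun τ _ => by ring
      rw [hS, pow_succ]
      field_simp
      try ring

lemma homZ_mono (γ : ℝ) (hγ : 0 ≤ γ) (a : ℕ) (x : ℤ) :
    homZ γ a x ≤ homZ γ (a + 1) x := by
  have h1 : ∀ y : ℤ, 1 ≤ homZ γ 1 y := by
    intro y
    rw [show (1 : ℕ) = 0 + 1 from rfl, homZ_succ]
    have : ∀ b : Bool, 1 ≤ Real.exp (γ * ind (y + rwStep b = 0)) * homZ γ 0 (y + rwStep b) := by
      intro b
      rw [homZ_zero, mul_one]
      rw [show (1:ℝ) = Real.exp 0 from (Real.exp_zero).symm]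
      exact Real.exp_le_exp.2 (mul_nonneg hγ (ind_nonneg _))
    calc (1 : ℝ) = (1 + 1) / 2 := by norm_num
    _ ≤ _ := by
        rw [Fintype.sum_bool]
        gcongr <;> [exact this true; exact this false]
  rw [homZ_split γ a 1 x]
  unfold homZ
  gcongr with τ hτ
  exact le_mul_of_one_le_right (Real.exp_pos _).le (h1 _)


lemma ind_of_true {P : Prop} (h : P) : ind P = 1 := by simp [ind, h]

lemma ind_of_false {P : Prop} (h : ¬P) : ind P = 0 := by simp [ind, h]

lemma homZ_le (γ : ℝ) (hγ : 0 ≤ γ) : ∀ N : ℕ, ∀ x : ℤ, homZ γ N x ≤ Real.exp γ * homZ γ N 0 := by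
  intro N
  induction N with
  | zero =>
      intro x
      rw [homZ_zero, homZ_zero, mul_one]
      exact Real.one_le_exp hγ
  | succ N ih =>
      intro x
      have key : ∀ y : ℤ, Real.exp (γ * ind (y = 0)) * homZ γ N y ≤ Real.exp γ * homZ γ N 0 := by
        intro y
        by_cases hy : y = 0
        · subst hy
          rw [ind_of_true rfl, mul_one]
        · rw [ind_of_false hy, mul_zero, Real.exp_zero, one_mul]
          exact ih y
      rw [homZ_succ, Fintype.sum_bool]
      have k1 := key (x + rwStep true)
      have k2 := key (x + rwStep false)
      have h2 : (Real.exp (γ * ind (x + rwStep true = 0)) * homZ γ N (x + rwStep true) +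
          Real.exp (γ * ind (x + rwStep false = 0)) * homZ γ N (x + rwStep false)) / 2
          ≤ Real.exp γ * homZ γ N 0 := by linarith
      exact h2.trans (mul_le_mul_of_nonneg_left (homZ_mono γ hγ N 0) (Real.exp_pos γ).le)

lemma homZ_pow (γ : ℝ) (hγ : 0 ≤ γ) (N : ℕ) :
    ∀ k : ℕ, ∀ x : ℤ, homZ γ (k * N) x ≤ (Real.exp γ * homZ γ N 0) ^ k := by
  intro k
  induction k with
  | zero => intro x; simp [homZ_zero]
  | succ k ih =>
      intro x
      have hC : 0 ≤ Real.exp γ * homZ γ N 0 :=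
        mul_nonneg (Real.exp_pos γ).le (homZ_nonneg γ N 0)
      have hnat : (k + 1) * N = N + k * N := by ring
      rw [hnat, homZ_split]
      have hle : (∑ τ : Fin N → Bool,
            Real.exp (γ * locTime x τ) * homZ γ (k * N) (pos x τ N)) / 2 ^ N
          ≤ (∑ τ : Fin N → Bool,
            Real.exp (γ * locTime x τ) * (Real.exp γ * homZ γ N 0) ^ k) / 2 ^ N := by
        gcongr with τ hτ
        exact ih _
      refine hle.trans ?_
      have heq : (∑ τ : Fin N → Bool,
            Real.exp (γ * locTime x τ) * (Real.exp γ * homZ γ N 0) ^ k) / 2 ^ N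
          = homZ γ N x * (Real.exp γ * homZ γ N 0) ^ k := by
        rw [← Finset.sum_mul]
        unfold homZ
        ring
      rw [heq, pow_succ]
      calc homZ γ N x * (Real.exp γ * homZ γ N 0) ^ k
          ≤ (Real.exp γ * homZ γ N 0) * (Real.exp γ * homZ γ N 0) ^ k :=
            mul_le_mul_of_nonneg_right (homZ_le γ hγ N x) (pow_nonneg hC k)
        _ = _ := by ring


/-- For every `x ∈ ℤ`, `γ ≥ 0` and `N ≥ 1`,
`E_x[e^{γ L_N}] ≤ e^γ E₀[e^{γ L_N}]`; more generally, for every `k ≥ 1`,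
`E_x[e^{γ L_{kN}}] ≤ (e^γ E₀[e^{γ L_N}])^k`. -/
theorem homZ_starting_point_bound (x : ℤ) (γ : ℝ) (hγ : 0 ≤ γ) (N : ℕ) (hN : 1 ≤ N) :
    homZ γ N x ≤ Real.exp γ * homZ γ N 0 ∧
    ∀ k : ℕ, 1 ≤ k → homZ γ (k * N) x ≤ (Real.exp γ * homZ γ N 0) ^ k :=
  ⟨homZ_le γ hγ N x, fun k _ => homZ_pow γ hγ N k x⟩

end
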